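/- Let G = (V, E) be a finite directed graph with a designated source s ∈ V from which every vertex is reachable, and let T ⊆ E be a spanning arborescence rooted at s. Suppose each vertex x ∈ V ∖ {s} is assigned a real interval [a_x, b_x] with a_x < b_x, such that for every edge (u, v) ∈ T with u ≠ s we have b_u ≤ a_v. Then for every choice of pairwise distinct real numbers r_x ∈ [a_x, b_x] (x ∈ V ∖ {s}), the linear ordering of V ∖ {s} by increasing r_x is a linearization of (G, s). -/
import Mathlib


variable {V : Type*}

/-- `p` is a directed walk from `s` to `v` in the digraph with edge relation `E`:
`p` is the (nonempty) list of visited vertices, starting at `s`, ending at `v`,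
and each consecutive pair of vertices is an edge. -/
def IsWalk (E : V → V → Prop) (s v : V) (p : List V) : Prop :=
  p.Chain' E ∧ p.head? = some s ∧ p.getLast? = some v

/-- `v` is reachable from `s` by a directed walk. -/
def DiReachable (E : V → V → Prop) (s v : V) : Prop :=
  ∃ p, IsWalk E s v p

/-- Hop-distance from `s` to `v`: the minimum number of edges on a directed path
(equivalently, walk) from `s` to `v`.  A walk on `k + 1` vertices has `k` edges. -/
noncomputable def hopDist (E : V → V → Prop) (s v : V) : ℕ :=
  sInf {k | ∃ p, IsWalk E s v p ∧ p.length = k + 1}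

/-- The total weight of a walk `p` under the edge weighting `w`:
the sum of `w` over the consecutive pairs of vertices of `p`. -/
def walkWeight (w : V → V → ℝ) (p : List V) : ℝ :=
  ((p.zip p.tail).map fun e => w e.1 e.2).sum

/-- Weighted distance from `s` to `v` under the weighting `w`:
the minimum total weight of a directed path from `s` to `v`. -/
noncomputable def weightedDist (E : V → V → Prop) (w : V → V → ℝ) (s v : V) : ℝ :=
  sInf {c | ∃ p, IsWalk E s v p ∧ p.Nodup ∧ walkWeight w p = c}

/-- `L` is a linearization of `(G, s)`: `L` is a linear ordering (a duplicate-free list)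
of `V \ {s}`, and there exists a positive edge weighting `w` of `G` such that the weighted
distances from `s` of all vertices `≠ s` are pairwise distinct and `L` lists `V \ {s}`
in increasing order of weighted distance from `s`. -/
def IsLinearization (E : V → V → Prop) (s : V) (L : List V) : Prop :=
  L.Nodup ∧ (∀ v, v ∈ L ↔ v ≠ s) ∧
  ∃ w : V → V → ℝ,
    (∀ u v, E u v → 0 < w u v) ∧
    (∀ x, x ≠ s → ∀ y, y ≠ s → x ≠ y →
      weightedDist E w s x ≠ weightedDist E w s y) ∧
    L.Pairwise (fun x y => weightedDist E w s x < weightedDist E w s y)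

/-- `ℓ(G, s)`: the number of linearizations of `(G, s)`. -/
noncomputable def numLinearizations (E : V → V → Prop) (s : V) : ℕ :=
  {L : List V | IsLinearization E s L}.ncard

/-- `T` is a spanning arborescence of `(G, s)`: a subset of the edges of `G` such that
every vertex `v ≠ s` is reachable from `s` in `T` and has exactly one incoming `T`-edge,
and `s` has no incoming `T`-edge. -/
def IsArborescence (E T : V → V → Prop) (s : V) : Prop :=
  (∀ u v, T u v → E u v) ∧
  (∀ u, ¬ T u s) ∧
  (∀ v, v ≠ s → DiReachable T s v ∧ ∃! u, T u v)

/--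
Let `G = (V, E)` be a finite directed graph with a designated source `s`
from which every vertex is reachable, and let `T ⊆ E` be a spanning arborescence rooted at
`s`.  Suppose each vertex `x ≠ s` is assigned a real interval `[a x, b x]` with `a x < b x`,
such that for every edge `(u, v) ∈ T` with `u ≠ s` we have `b u ≤ a v`.  Then for every
choice of pairwise distinct real numbers `r x ∈ [a x, b x]` (for `x ≠ s`), the linear
ordering of `V \ {s}` by increasing `r x` is a linearization of `(G, s)`.
-/
lemma walkWeight_telescope_le {E : V → V → Prop} {w : V → V → ℝ} {t : V → ℝ}
    (hw : ∀ u v, E u v → t v - t u ≤ w u v) (p : List V) :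
    p.Chain' E → ∀ x v, p.head? = some x → p.getLast? = some v →
      t v - t x ≤ walkWeight w p := by
  induction p with
  | nil => intro _ x v hx _; simp at hx
  | cons u q ih =>
    intro hc x v hx hv
    have hxu : x = u := by simpa using hx.symm
    subst hxu
    cases q with
    | nil =>
      have hvu : v = x := by simpa using hv.symm
      subst hvu
      simp [walkWeight]
    | cons y l =>
      have huy : E x y := (List.isChain_cons_cons.mp hc).1
      have hc' : (y :: l).Chain' E := (List.isChain_cons_cons.mp hc).2
      have hv' : (y :: l).getLast? = some v := by
        rwa [List.getLast?_cons_cons] at hv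
      have h1 := ih hc' y v rfl hv'
      have h2 := hw x y huy
      have h3 : walkWeight w (x :: y :: l) = w x y + walkWeight w (y :: l) := by
        simp [walkWeight]
      linarith

lemma walkWeight_telescope_eq {T : V → V → Prop} {w : V → V → ℝ} {t : V → ℝ}
    (hw : ∀ u v, T u v → w u v = t v - t u) (p : List V) :
    p.Chain' T → ∀ x v, p.head? = some x → p.getLast? = some v →
      walkWeight w p = t v - t x := by
  induction p with
  | nil => intro _ x v hx _; simp at hx
  | cons u q ih =>
    intro hc x v hx hv
    have hxu : x = u := by simpa using hx.symm
    subst hxu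
    cases q with
    | nil =>
      have hvu : v = x := by simpa using hv.symm
      subst hvu
      simp [walkWeight]
    | cons y l =>
      have huy : T x y := (List.isChain_cons_cons.mp hc).1
      have hc' : (y :: l).Chain' T := (List.isChain_cons_cons.mp hc).2
      have hv' : (y :: l).getLast? = some v := by
        rwa [List.getLast?_cons_cons] at hv
      have h1 := ih hc' y v rfl hv'
      have h2 := hw x y huy
      have h3 : walkWeight w (x :: y :: l) = w x y + walkWeight w (y :: l) := by
        simp [walkWeight]
      linarith

lemma nodup_of_chain'_mono {T : V → V → Prop} {t : V → ℝ}
    (h : ∀ u v, T u v → t u < t v) {p : List V} (hp : p.Chain' T) : p.Nodup := by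
  haveI : IsTrans V (fun x y => t x < t y) := ⟨fun _ _ _ => lt_trans⟩
  have hc : p.Chain' (fun x y => t x < t y) := hp.imp (fun {a b} hab => h a b hab)
  have hpw : p.Pairwise (fun x y => t x < t y) := List.isChain_iff_pairwise.mp hc
  exact hpw.imp (fun {a b} hab => by rintro rfl; exact lt_irrefl _ hab)

theorem isLinearization_of_sorted_by_interval_points
    [Fintype V] [DecidableEq V] (E T : V → V → Prop) (s : V)
    (hreach : ∀ v, DiReachable E s v)
    (hT : IsArborescence E T s)
    (a b : V → ℝ)
    (hab : ∀ x, x ≠ s → a x < b x)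
    (hTint : ∀ u v, T u v → u ≠ s → b u ≤ a v)
    (r : V → ℝ)
    (hr : ∀ x, x ≠ s → a x ≤ r x ∧ r x ≤ b x)
    (hrinj : ∀ x, x ≠ s → ∀ y, y ≠ s → x ≠ y → r x ≠ r y)
    (L : List V) (hnd : L.Nodup) (hmem : ∀ v, v ∈ L ↔ v ≠ s)
    (hsort : L.Pairwise (fun x y => r x < r y)) :
    IsLinearization E s L := by
  classical
  obtain ⟨hTE, hTs, hTv⟩ := hT
  set C : ℝ := 1 + ∑ x : V, |r x| with hC
  have hCpos : ∀ x : V, 0 < r x + C := by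
    intro x
    have h1 : |r x| ≤ ∑ y : V, |r y| :=
      Finset.single_le_sum (f := fun y => |r y|) (fun y _ => abs_nonneg _) (Finset.mem_univ x)
    have h2 : -r x ≤ |r x| := neg_le_abs _
    rw [hC]; linarith
  set t : V → ℝ := fun x => if x = s then 0 else r x + C with ht
  have hts : t s = 0 := by simp [ht]
  have htv : ∀ v, v ≠ s → t v = r v + C := fun v hv => by simp [ht, hv]
  have hTlt : ∀ u v, T u v → t u < t v := by
    intro u v huv
    have hv : v ≠ s := fun h => hTs u (h ▸ huv)
    rw [htv v hv]
    by_cases hu : u = s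
    · rw [hu, hts]; exact hCpos v
    · rw [htv u hu]
      have hne : u ≠ v := by
        rintro rfl
        exact absurd (hTint u u huv hu) (not_le.mpr (hab u hu))
      have h1 : r u ≤ r v :=
        ((hr u hu).2.trans (hTint u v huv hu)).trans (hr v hv).1
      have h2 : r u ≠ r v := hrinj u hu v hv hne
      linarith [lt_of_le_of_ne h1 h2]
  set w : V → V → ℝ := fun u v => if T u v then t v - t u else max (t v - t u) 1 with hw
  have hwT : ∀ u v, T u v → w u v = t v - t u := fun u v h => by simp [hw, h]
  have hwge : ∀ u v, E u v → t v - t u ≤ w u v := by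
    intro u v _
    by_cases h : T u v
    · simp [hw, h]
    · rw [hw]; simp only [h, if_false]; exact le_max_left _ _
  have hdist : ∀ v, v ≠ s → weightedDist E w s v = t v := by
    intro v hv
    obtain ⟨p, hpc, hph, hpl⟩ := (hTv v hv).1
    have hEwalk : IsWalk E s v p := ⟨hpc.imp (fun {a b} h => hTE a b h), hph, hpl⟩
    have hnodup : p.Nodup := nodup_of_chain'_mono hTlt hpc
    have hweq : walkWeight w p = t v := by
      have := walkWeight_telescope_eq hwT p hpc s v hph hpl
      rw [hts] at this; linarith
    have hmemS : t v ∈ {c | ∃ p, IsWalk E s v p ∧ p.Nodup ∧ walkWeight w p = c} :=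
      ⟨p, hEwalk, hnodup, hweq⟩
    have hlb : ∀ c ∈ {c | ∃ p, IsWalk E s v p ∧ p.Nodup ∧ walkWeight w p = c}, t v ≤ c := by
      rintro c ⟨q, ⟨hqc, hqh, hql⟩, -, rfl⟩
      have := walkWeight_telescope_le hwge q hqc s v hqh hql
      rw [hts] at this; linarith
    exact le_antisymm (csInf_le ⟨t v, hlb⟩ hmemS) (le_csInf ⟨t v, hmemS⟩ hlb)
  refine ⟨hnd, hmem, w, ?_, ?_, ?_⟩
  · intro u v hE
    by_cases h : T u v
    · have := hTlt u v h; simp [hw, h]; linarith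
    · rw [hw]; simp only [h, if_false]
      exact lt_of_lt_of_le one_pos (le_max_right _ _)
  · intro x hx y hy hxy
    rw [hdist x hx, hdist y hy, htv x hx, htv y hy]
    intro h
    exact hrinj x hx y hy hxy (by linarith)
  · refine hsort.imp_of_mem ?_
    intro x y hxL hyL hlt
    have hx := (hmem x).1 hxL
    have hy := (hmem y).1 hyL
    rw [hdist x hx, hdist y hy, htv x hx, htv y hy]
    linarith
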